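/- Let g, h : ℝ → ℝ be n-times differentiable. Then for every real x, dⁿ/dxⁿ [g(x²) h(x²)] = n! · Σ_{k=0}^{⌊n/2⌋} (2x)^{n−2k} / ((n−2k)! k!) · Σ_{j=0}^{n−k} C(n−k, j) · g^{(n−k−j)}(x²) · h^{(j)}(x²), a generalization of the Leibniz rule. -/

import Mathlib

open Finset

noncomputable def auxC : ℕ → ℕ → ℝ
  | 0, 0 => 1
  | 0, _+1 => 0
  | n+1, 0 => auxC n 0
  | n+1, k+1 => auxC n (k+1) + 2*((n:ℝ) - 2*k) * auxC n k

lemma auxC_eq : ∀ n k : ℕ, auxC n k =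
    if 2*k ≤ n then (n.factorial : ℝ)/(((n-2*k).factorial : ℝ) * k.factorial) else 0 := by
  intro n
  induction n with
  | zero =>
    intro k
    match k with
    | 0 => simp [auxC]
    | k+1 => simp [auxC]
  | succ n IH =>
    intro k
    match k with
    | 0 =>
      have h2 : ((n+1).factorial : ℝ) ≠ 0 := Nat.cast_ne_zero.2 (n+1).factorial_ne_zero
      have h3 : (n.factorial : ℝ) ≠ 0 := Nat.cast_ne_zero.2 n.factorial_ne_zero
      simp [auxC, IH 0, div_self, h2, h3]
    | k+1 =>
      rw [show auxC (n+1) (k+1) = auxC n (k+1) + 2*((n:ℝ) - 2*k) * auxC n k from rfl,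
        IH (k+1), IH k]
      by_cases h1 : 2*(k+1) ≤ n
      · obtain ⟨m, rfl⟩ : ∃ m, n = 2*k+2+m := ⟨n - (2*k+2), by omega⟩
        rw [if_pos (show 2*(k+1) ≤ 2*k+2+m by omega), if_pos (show 2*k ≤ 2*k+2+m by omega),
          if_pos (show 2*(k+1) ≤ 2*k+2+m+1 by omega)]
        have e1 : 2*k+2+m - 2*(k+1) = m := by omega
        have e2 : 2*k+2+m - 2*k = m+2 := by omega
        have e3 : 2*k+2+m+1 - 2*(k+1) = m+1 := by omega
        rw [e1, e2, e3]
        rw [show (2*k+2+m+1).factorial = (2*k+2+m+1) * (2*k+2+m).factorial from rfl,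
          show (m+2).factorial = (m+2)*((m+1)*m.factorial) from rfl,
          show (m+1).factorial = (m+1)*m.factorial from rfl,
          show (k+1).factorial = (k+1)*k.factorial from rfl]
        have h2 : (m.factorial : ℝ) ≠ 0 := Nat.cast_ne_zero.2 m.factorial_ne_zero
        have h3 : (k.factorial : ℝ) ≠ 0 := Nat.cast_ne_zero.2 k.factorial_ne_zero
        push_cast
        field_simp
        ring
      · by_cases h2 : 2*(k+1) ≤ n+1
        · -- n = 2k+1
          have hn : n = 2*k+1 := by omega
          subst hn
          rw [if_neg h1, if_pos (show 2*k ≤ 2*k+1 by omega), if_pos h2]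
          have e1 : 2*k+1 - 2*k = 1 := by omega
          have e2 : 2*k+1+1 - 2*(k+1) = 0 := by omega
          rw [e1, e2]
          rw [show (2*k+1+1).factorial = (2*k+1+1) * (2*k+1).factorial from rfl,
            show (k+1).factorial = (k+1)*k.factorial from rfl]
          have h3 : (k.factorial : ℝ) ≠ 0 := Nat.cast_ne_zero.2 k.factorial_ne_zero
          have h4 : ((2*k+1).factorial : ℝ) ≠ 0 := Nat.cast_ne_zero.2 (2*k+1).factorial_ne_zero
          push_cast
          field_simp
          ring
        · rw [if_neg h1, if_neg h2]
          by_cases h3 : 2*k ≤ n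
          · have hn : n = 2*k := by omega
            rw [if_pos h3]
            subst hn
            push_cast
            ring
          · rw [if_neg h3]
            ring

lemma auxC_eq_zero {n k : ℕ} (h : n < 2*k) : auxC n k = 0 := by
  rw [auxC_eq, if_neg (by omega)]

lemma comp_sq : ∀ (n : ℕ) (F : ℝ → ℝ), ContDiff ℝ n F → ∀ x : ℝ,
    iteratedDeriv n (fun t => F (t^2)) x =
      ∑ k ∈ Finset.range (n+1), auxC n k *
        ((2*x)^(n-2*k) * iteratedDeriv (n-k) F (x^2)) := by
  intro n
  induction n with
  | zero => intro F hF x; simp [auxC]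
  | succ n IH =>
    intro F hF x
    have hFn : ContDiff ℝ n F := hF.of_le (by exact_mod_cast Nat.le_succ n)
    rw [iteratedDeriv_succ, funext (IH F hFn)]
    have hd : ∀ m : ℕ, m ≤ n →
        HasDerivAt (fun y : ℝ => iteratedDeriv m F (y^2))
          (iteratedDeriv (m+1) F (x^2) * (2*x)) x := by
      intro m hm
      have hdiff : Differentiable ℝ (iteratedDeriv m F) :=
        hF.differentiable_iteratedDeriv m (by exact_mod_cast Nat.lt_succ_of_le hm)
      have h1 : HasDerivAt (iteratedDeriv m F) (iteratedDeriv (m+1) F (x^2)) (x^2) := by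
        have := (hdiff (x^2)).hasDerivAt
        rwa [show deriv (iteratedDeriv m F) = iteratedDeriv (m+1) F from
          iteratedDeriv_succ.symm] at this
      have h2 : HasDerivAt (fun y : ℝ => y^2) (2*x) x := by
        simpa using hasDerivAt_pow 2 x
      have := HasDerivAt.comp (h₂ := iteratedDeriv m F) (h := fun y : ℝ => y^2) x h1 h2
      simpa [Function.comp_def] using this
    have hpow : ∀ m : ℕ, HasDerivAt (fun y : ℝ => (2*y)^m)
        ((m:ℝ) * (2*x)^(m-1) * 2) x := by
      intro m
      have := (((hasDerivAt_id x).const_mul (2:ℝ)).fun_pow m)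
      simpa using this
    have key : HasDerivAt (fun y => ∑ k ∈ Finset.range (n+1), auxC n k *
        ((2*y)^(n-2*k) * iteratedDeriv (n-k) F (y^2)))
        (∑ k ∈ Finset.range (n+1), auxC n k *
          ( ((n-2*k : ℕ):ℝ) * (2*x)^(n-2*k-1) * 2 * iteratedDeriv (n-k) F (x^2)
            + (2*x)^(n-2*k) * (iteratedDeriv (n-k+1) F (x^2) * (2*x)) )) x := by
      refine HasDerivAt.fun_sum fun k hk => ?_
      have := ((hpow (n-2*k)).mul (hd (n-k) (Nat.sub_le n k))).const_mul (auxC n k)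
      simpa [mul_assoc, mul_add] using this
    rw [key.deriv]
    -- now pure algebra
    rw [Finset.sum_range_succ' (fun k => auxC (n+1) k *
      ((2*x)^(n+1-2*k) * iteratedDeriv (n+1-k) F (x^2))) (n+1)]
    have hrec : ∀ k, auxC (n+1) (k+1) = auxC n (k+1) + 2*((n:ℝ) - 2*k) * auxC n k := fun k => rfl
    have h0 : auxC (n+1) 0 = auxC n 0 := rfl
    have hsplit : ∀ k ∈ Finset.range (n+1),
        auxC (n+1) (k+1) * ((2*x)^(n+1-2*(k+1)) * iteratedDeriv (n+1-(k+1)) F (x^2))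
        = auxC n (k+1) * ((2*x)^(n-2*k-1) * iteratedDeriv (n-k) F (x^2))
          + 2*((n:ℝ) - 2*k) * auxC n k * ((2*x)^(n-2*k-1) * iteratedDeriv (n-k) F (x^2)) := by
      intro k hk
      rw [hrec k, show n+1-2*(k+1) = n-2*k-1 by omega, show n+1-(k+1) = n-k by omega]
      ring
    rw [Finset.sum_congr rfl hsplit, Finset.sum_add_distrib]
    have part1 : ∑ k ∈ Finset.range (n+1), auxC n k *
          (((n-2*k : ℕ):ℝ) * (2*x)^(n-2*k-1) * 2 * iteratedDeriv (n-k) F (x^2))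
        = ∑ k ∈ Finset.range (n+1),
          2*((n:ℝ) - 2*k) * auxC n k * ((2*x)^(n-2*k-1) * iteratedDeriv (n-k) F (x^2)) := by
      refine Finset.sum_congr rfl fun k hk => ?_
      by_cases h2k : 2*k ≤ n
      · rw [Nat.cast_sub h2k]
        push_cast
        ring
      · rw [auxC_eq_zero (by omega)]
        ring
    have part2 : ∑ k ∈ Finset.range (n+1), auxC n k *
          ((2*x)^(n-2*k) * (iteratedDeriv (n-k+1) F (x^2) * (2*x)))
        = (∑ k ∈ Finset.range (n+1),
            auxC n (k+1) * ((2*x)^(n-2*k-1) * iteratedDeriv (n-k) F (x^2)))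
          + auxC (n+1) 0 * ((2*x)^(n+1-2*0) * iteratedDeriv (n+1-0) F (x^2)) := by
      rw [Finset.sum_range_succ' (fun k => auxC n k *
        ((2*x)^(n-2*k) * (iteratedDeriv (n-k+1) F (x^2) * (2*x)))) n]
      have ha : ∑ k ∈ Finset.range n, auxC n (k+1) *
            ((2*x)^(n-2*(k+1)) * (iteratedDeriv (n-(k+1)+1) F (x^2) * (2*x)))
          = ∑ k ∈ Finset.range (n+1),
            auxC n (k+1) * ((2*x)^(n-2*k-1) * iteratedDeriv (n-k) F (x^2)) := by
        rw [Finset.sum_range_succ (fun k => auxC n (k+1) *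
          ((2*x)^(n-2*k-1) * iteratedDeriv (n-k) F (x^2))) n]
        rw [auxC_eq_zero (show n < 2*(n+1) by omega)]
        rw [zero_mul, add_zero]
        refine Finset.sum_congr rfl fun k hk => ?_
        have hkn : k < n := Finset.mem_range.mp hk
        by_cases h2k : 2*(k+1) ≤ n
        · rw [show n-(k+1)+1 = n-k by omega, show n-2*(k+1) = n-2*k-2 by omega,
            show n-2*k-1 = (n-2*k-2)+1 by omega, pow_succ]
          ring
        · rw [auxC_eq_zero (show n < 2*(k+1) by omega)]
          ring
      rw [ha, h0]
      have hb : auxC n 0 * ((2*x)^(n-2*0) * (iteratedDeriv (n-0+1) F (x^2) * (2*x)))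
          = auxC n 0 * ((2*x)^(n+1-2*0) * iteratedDeriv (n+1-0) F (x^2)) := by
        simp only [Nat.sub_zero, Nat.mul_zero, pow_succ]
        ring
      rw [hb]
    calc ∑ k ∈ Finset.range (n+1), auxC n k *
          ( ((n-2*k : ℕ):ℝ) * (2*x)^(n-2*k-1) * 2 * iteratedDeriv (n-k) F (x^2)
            + (2*x)^(n-2*k) * (iteratedDeriv (n-k+1) F (x^2) * (2*x)) )
        = (∑ k ∈ Finset.range (n+1), auxC n k *
            (((n-2*k : ℕ):ℝ) * (2*x)^(n-2*k-1) * 2 * iteratedDeriv (n-k) F (x^2)))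
          + ∑ k ∈ Finset.range (n+1), auxC n k *
            ((2*x)^(n-2*k) * (iteratedDeriv (n-k+1) F (x^2) * (2*x))) := by
          rw [← Finset.sum_add_distrib]
          exact Finset.sum_congr rfl fun k _ => by ring
      _ = _ := by
          rw [part1, part2]
          ring

lemma leibniz_iteratedDeriv : ∀ (n : ℕ) (g h : ℝ → ℝ), ContDiff ℝ n g → ContDiff ℝ n h →
    ∀ x : ℝ, iteratedDeriv n (fun y => g y * h y) x =
      ∑ j ∈ Finset.range (n+1), (n.choose j : ℝ) * iteratedDeriv (n-j) g x * iteratedDeriv j h x := by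
  intro n
  induction n with
  | zero => intro g h hg hh x; simp
  | succ n IH =>
    intro g h hg hh x
    have hgn : ContDiff ℝ n g := hg.of_le (by exact_mod_cast Nat.le_succ n)
    have hhn : ContDiff ℝ n h := hh.of_le (by exact_mod_cast Nat.le_succ n)
    rw [iteratedDeriv_succ, funext (IH g h hgn hhn)]
    have hd : ∀ m : ℕ, m ≤ n → ∀ (f : ℝ → ℝ), ContDiff ℝ (n+1) f →
        HasDerivAt (iteratedDeriv m f) (iteratedDeriv (m+1) f x) x := by
      intro m hm f hf
      have hdiff : Differentiable ℝ (iteratedDeriv m f) :=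
        hf.differentiable_iteratedDeriv m (by exact_mod_cast Nat.lt_succ_of_le hm)
      have := (hdiff x).hasDerivAt
      rwa [show deriv (iteratedDeriv m f) = iteratedDeriv (m+1) f from iteratedDeriv_succ.symm] at this
    have key : HasDerivAt (fun y => ∑ j ∈ Finset.range (n+1),
        (n.choose j : ℝ) * iteratedDeriv (n-j) g y * iteratedDeriv j h y)
        (∑ j ∈ Finset.range (n+1), ((n.choose j : ℝ) *
          (iteratedDeriv (n-j+1) g x * iteratedDeriv j h x)
            + (n.choose j : ℝ) * (iteratedDeriv (n-j) g x * iteratedDeriv (j+1) h x))) x := by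
      refine HasDerivAt.fun_sum fun j hj => ?_
      have hj' : j ≤ n := Nat.lt_succ_iff.mp (Finset.mem_range.mp hj)
      have h1 := hd (n-j) (Nat.sub_le n j) g hg
      have h2 := hd j hj' h hh
      have := (h1.mul h2).const_mul (n.choose j : ℝ)
      simpa [mul_assoc, mul_add] using this
    rw [key.deriv]
    rw [Finset.sum_range_succ' (fun j => ((n+1).choose j : ℝ) *
      iteratedDeriv (n+1-j) g x * iteratedDeriv j h x) (n+1)]
    simp only [Nat.succ_sub_succ, Nat.choose_zero_right, Nat.cast_one, one_mul, Nat.sub_zero]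
    have swap : ∑ j ∈ Finset.range (n+1),
          (n.choose j : ℝ) * (iteratedDeriv (n-j+1) g x * iteratedDeriv j h x)
        = (∑ j ∈ Finset.range (n+1),
            (n.choose (j+1) : ℝ) * (iteratedDeriv (n-j) g x * iteratedDeriv (j+1) h x))
          + iteratedDeriv (n+1) g x * iteratedDeriv 0 h x := by
      have hfix : ∑ j ∈ Finset.range (n+1),
            (n.choose j : ℝ) * (iteratedDeriv (n-j+1) g x * iteratedDeriv j h x)
          = ∑ j ∈ Finset.range (n+1),
            (n.choose j : ℝ) * (iteratedDeriv (n+1-j) g x * iteratedDeriv j h x) := by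
        refine Finset.sum_congr rfl fun j hj => ?_
        have hj' : j ≤ n := Nat.lt_succ_iff.mp (Finset.mem_range.mp hj)
        rw [show n-j+1 = n+1-j by omega]
      have hext : ∑ j ∈ Finset.range (n+2),
            (n.choose j : ℝ) * (iteratedDeriv (n+1-j) g x * iteratedDeriv j h x)
          = ∑ j ∈ Finset.range (n+1),
            (n.choose j : ℝ) * (iteratedDeriv (n+1-j) g x * iteratedDeriv j h x) := by
        rw [Finset.sum_range_succ (fun j => (n.choose j : ℝ) *
          (iteratedDeriv (n+1-j) g x * iteratedDeriv j h x)) (n+1)]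
        simp [Nat.choose_succ_self]
      rw [hfix, ← hext, Finset.sum_range_succ' (fun j => (n.choose j : ℝ) *
        (iteratedDeriv (n+1-j) g x * iteratedDeriv j h x)) (n+1)]
      simp only [Nat.succ_sub_succ, Nat.choose_zero_right, Nat.cast_one, one_mul, Nat.sub_zero]
    rw [Finset.sum_add_distrib, swap]
    have : ∀ j ∈ Finset.range (n+1),
        ((n+1).choose (j+1) : ℝ) * iteratedDeriv (n-j) g x * iteratedDeriv (j+1) h x
        = (n.choose (j+1) : ℝ) * (iteratedDeriv (n-j) g x * iteratedDeriv (j+1) h x)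
          + (n.choose j : ℝ) * (iteratedDeriv (n-j) g x * iteratedDeriv (j+1) h x) := by
      intro j hj
      rw [Nat.choose_succ_succ]
      push_cast
      ring
    rw [Finset.sum_congr rfl this, Finset.sum_add_distrib]
    ring

theorem iteratedDeriv_mul_comp_sq (n : ℕ) (g h : ℝ → ℝ)
    (hg : ContDiff ℝ n g) (hh : ContDiff ℝ n h) (x : ℝ) :
    iteratedDeriv n (fun t => g (t ^ 2) * h (t ^ 2)) x =
      (n.factorial : ℝ) * ∑ k ∈ Finset.range (n / 2 + 1),
        (2 * x) ^ (n - 2 * k) / (((n - 2 * k).factorial : ℝ) * k.factorial) *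
          ∑ j ∈ Finset.range (n - k + 1),
            ((n - k).choose j : ℝ) * iteratedDeriv (n - k - j) g (x ^ 2) *
              iteratedDeriv j h (x ^ 2) := by
  have hF : ContDiff ℝ n (fun y => g y * h y) := hg.mul hh
  rw [show (fun t => g (t ^ 2) * h (t ^ 2)) = (fun t => (fun y => g y * h y) (t ^ 2)) from rfl,
    comp_sq n (fun y => g y * h y) hF x]
  have hL : ∀ k ∈ Finset.range (n+1),
      auxC n k * ((2*x)^(n-2*k) * iteratedDeriv (n-k) (fun y => g y * h y) (x^2))
      = auxC n k * ((2*x)^(n-2*k) * ∑ j ∈ Finset.range (n-k+1),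
          ((n-k).choose j : ℝ) * iteratedDeriv (n-k-j) g (x^2) * iteratedDeriv j h (x^2)) := by
    intro k _
    rw [leibniz_iteratedDeriv (n-k) g h (hg.of_le (by exact_mod_cast Nat.sub_le n k))
      (hh.of_le (by exact_mod_cast Nat.sub_le n k)) (x^2)]
  rw [Finset.sum_congr rfl hL]
  calc ∑ k ∈ Finset.range (n+1), auxC n k * ((2*x)^(n-2*k) * ∑ j ∈ Finset.range (n-k+1),
          ((n-k).choose j : ℝ) * iteratedDeriv (n-k-j) g (x^2) * iteratedDeriv j h (x^2))
      = ∑ k ∈ Finset.range (n/2+1), auxC n k * ((2*x)^(n-2*k) * ∑ j ∈ Finset.range (n-k+1),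
          ((n-k).choose j : ℝ) * iteratedDeriv (n-k-j) g (x^2) * iteratedDeriv j h (x^2)) := by
        refine (Finset.sum_subset ?_ ?_).symm
        · intro k hk
          simp only [Finset.mem_range] at *
          omega
        · intro k hk1 hk2
          simp only [Finset.mem_range] at *
          rw [auxC_eq_zero (by omega), zero_mul]
    _ = ∑ k ∈ Finset.range (n/2+1), (n.factorial : ℝ) *
          ((2 * x) ^ (n - 2 * k) / (((n - 2 * k).factorial : ℝ) * k.factorial) *
          ∑ j ∈ Finset.range (n-k+1),
          ((n-k).choose j : ℝ) * iteratedDeriv (n-k-j) g (x^2) * iteratedDeriv j h (x^2)) := by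
        refine Finset.sum_congr rfl fun k hk => ?_
        have hk' : 2*k ≤ n := by
          simp only [Finset.mem_range] at hk
          omega
        rw [auxC_eq, if_pos hk']
        ring
    _ = _ := by rw [← Finset.mul_sum]
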